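/- Let ε ∈ (0,1), and let L and L_s be N×N real symmetric positive semidefinite matrices (the symmetric normalized Laplacians of the full graph and of a spectrally sparsified graph) satisfying the spectral sparsification guarantee (1−ε)·xᵀLx ≤ xᵀL_s x ≤ (1+ε)·xᵀLx for all x ∈ ℝ^N. Let σ : ℝ → ℝ be 1-Lipschitz (e.g. the ReLU or ELU function), applied entrywise to matrices, let H ∈ ℝ^{N×D} and W ∈ ℝ^{D×F}, and define the GCN layer outputs Ĥ_f = σ((I − L)·H·W) and Ĥ_s = σ((I − L_s)·H·W) (entrywise application of σ). Then ‖Ĥ_f − Ĥ_s‖_F ≤ 4ε·‖L‖₂·‖H·W‖_F. -/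

import Mathlib

open Matrix

/-- Spectral norm: the operator norm induced by the Euclidean vector norm. -/
noncomputable def matSpectralNorm {m n : ℕ} (A : Matrix (Fin m) (Fin n) ℝ) : ℝ :=
  ‖LinearMap.toContinuousLinearMap (Matrix.toEuclideanLin A)‖

/-- Frobenius norm: square root of the sum of squares of all entries. -/
noncomputable def frobeniusNorm {m n : ℕ} (A : Matrix (Fin m) (Fin n) ℝ) : ℝ :=
  Real.sqrt (∑ i, ∑ j, (A i j) ^ 2)

lemma quad_le_spectral {n : ℕ} (L : Matrix (Fin n) (Fin n) ℝ) (x : Fin n → ℝ) :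
    x ⬝ᵥ (L *ᵥ x) ≤ matSpectralNorm L * (x ⬝ᵥ x) := by
  set T := LinearMap.toContinuousLinearMap (Matrix.toEuclideanLin L) with hT
  set x' : EuclideanSpace ℝ (Fin n) := (WithLp.equiv 2 (Fin n → ℝ)).symm x with hx'
  have h1 : x ⬝ᵥ (L *ᵥ x) = inner ℝ x' (T x') := by
    simp [hT, hx', Matrix.toEuclideanLin_apply, PiLp.inner_apply, Equiv.refl_apply,
      dotProduct, WithLp.equiv_symm_apply, PiLp.toLp_apply, mulVec]
    exact Finset.sum_congr rfl fun _ _ => mul_comm _ _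
  have h2 : (x ⬝ᵥ x) = inner ℝ x' x' := by
    simp [hx', PiLp.inner_apply, dotProduct, WithLp.equiv_symm_apply, PiLp.toLp_apply]
    rw [EuclideanSpace.norm_sq_eq]; simp [sq]
  rw [h1, h2]
  calc inner ℝ x' (T x') ≤ ‖x'‖ * ‖T x'‖ := real_inner_le_norm x' (T x')
    _ ≤ ‖x'‖ * (‖T‖ * ‖x'‖) := by
        have := T.le_opNorm x'
        nlinarith [norm_nonneg x', norm_nonneg (T x')]
    _ = ‖T‖ * (inner ℝ x' x') := by rw [real_inner_self_eq_norm_mul_norm]; ring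

/-- Cauchy–Schwarz for a nonnegative symmetric bilinear form given by a matrix. -/
lemma cs_psd_form {n : ℕ} (P : Matrix (Fin n) (Fin n) ℝ)
    (hsym : ∀ u v : Fin n → ℝ, u ⬝ᵥ (P *ᵥ v) = v ⬝ᵥ (P *ᵥ u))
    (hpos : ∀ z : Fin n → ℝ, 0 ≤ z ⬝ᵥ (P *ᵥ z)) (x y : Fin n → ℝ) :
    (y ⬝ᵥ (P *ᵥ x)) ^ 2 ≤ (x ⬝ᵥ (P *ᵥ x)) * (y ⬝ᵥ (P *ᵥ y)) := by
  have key : ∀ t : ℝ, 0 ≤ (y ⬝ᵥ (P *ᵥ y)) * (t * t) + (2 * (y ⬝ᵥ (P *ᵥ x))) * t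
      + (x ⬝ᵥ (P *ᵥ x)) := by
    intro t
    have h := hpos (x + t • y)
    have e1 : (x + t • y) ⬝ᵥ (P *ᵥ (x + t • y))
        = x ⬝ᵥ (P *ᵥ x) + t * (y ⬝ᵥ (P *ᵥ x)) + t * (x ⬝ᵥ (P *ᵥ y))
          + t * t * (y ⬝ᵥ (P *ᵥ y)) := by
      simp [Matrix.mulVec_add, Matrix.mulVec_smul, dotProduct_add, add_dotProduct,
        dotProduct_smul, smul_dotProduct, smul_eq_mul]
      ring
    rw [e1, hsym x y] at h
    linarith
  have hd := discrim_le_zero key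
  rw [discrim] at hd
  nlinarith [hd]


lemma dp_self_nonneg {n : ℕ} (z : Fin n → ℝ) : 0 ≤ z ⬝ᵥ z :=
  Finset.sum_nonneg fun i _ => mul_self_nonneg (z i)

/-- Generic symmetry of the bilinear form for a symmetric real matrix. -/
lemma form_symm {n : ℕ} (P : Matrix (Fin n) (Fin n) ℝ) (hP : ∀ i j, P i j = P j i)
    (u v : Fin n → ℝ) : u ⬝ᵥ (P *ᵥ v) = v ⬝ᵥ (P *ᵥ u) := by
  simp only [dotProduct, mulVec, Finset.mul_sum]
  rw [Finset.sum_comm]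
  apply Finset.sum_congr rfl; intro i _
  apply Finset.sum_congr rfl; intro j _
  rw [hP j i]; ring

set_option maxHeartbeats 1000000 in
/-- Key vector bound: `‖(Ls - L) x‖² ≤ (4 ε ‖L‖)² ‖x‖²` in dot-product form. -/
lemma key_vec_bound {n : ℕ} (ε : ℝ) (hε : ε ∈ Set.Ioo (0 : ℝ) 1)
    (L Ls : Matrix (Fin n) (Fin n) ℝ)
    (hL : L.PosSemidef) (hLs : Ls.PosSemidef)
    (hsparse : ∀ x : Fin n → ℝ,
      (1 - ε) * (x ⬝ᵥ (L *ᵥ x)) ≤ x ⬝ᵥ (Ls *ᵥ x) ∧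
      x ⬝ᵥ (Ls *ᵥ x) ≤ (1 + ε) * (x ⬝ᵥ (L *ᵥ x))) (x : Fin n → ℝ) :
    ((Ls - L) *ᵥ x) ⬝ᵥ ((Ls - L) *ᵥ x)
      ≤ (4 * ε * matSpectralNorm L) ^ 2 * (x ⬝ᵥ x) := by
  obtain ⟨hε0, hε1⟩ := hε
  have hLsymm : ∀ i j, L i j = L j i := fun i j => by
    have := hL.1.apply i j; simpa using this.symm
  have hLssymm : ∀ i j, Ls i j = Ls j i := fun i j => by
    have := hLs.1.apply i j; simpa using this.symm
  set A : Matrix (Fin n) (Fin n) ℝ := Ls - L with hA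
  set P : Matrix (Fin n) (Fin n) ℝ := ε • L + A with hP
  set Q : Matrix (Fin n) (Fin n) ℝ := ε • L - A with hQ
  have hAq : ∀ z : Fin n → ℝ, z ⬝ᵥ (A *ᵥ z) = z ⬝ᵥ (Ls *ᵥ z) - z ⬝ᵥ (L *ᵥ z) := by
    intro z; simp [hA, Matrix.sub_mulVec, dotProduct_sub]
  have hPq : ∀ z : Fin n → ℝ, z ⬝ᵥ (P *ᵥ z)
      = ε * (z ⬝ᵥ (L *ᵥ z)) + z ⬝ᵥ (A *ᵥ z) := by
    intro z; simp [hP, Matrix.add_mulVec, dotProduct_add, Matrix.smul_mulVec,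
      dotProduct_smul, smul_eq_mul]
  have hQq : ∀ z : Fin n → ℝ, z ⬝ᵥ (Q *ᵥ z)
      = ε * (z ⬝ᵥ (L *ᵥ z)) - z ⬝ᵥ (A *ᵥ z) := by
    intro z; simp [hQ, Matrix.sub_mulVec, dotProduct_sub, Matrix.smul_mulVec,
      dotProduct_smul, smul_eq_mul]
  have hPpos : ∀ z, 0 ≤ z ⬝ᵥ (P *ᵥ z) := by
    intro z; rw [hPq, hAq]; have := (hsparse z).1; nlinarith
  have hQpos : ∀ z, 0 ≤ z ⬝ᵥ (Q *ᵥ z) := by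
    intro z; rw [hQq, hAq]; have := (hsparse z).2; nlinarith
  have hAsymm : ∀ i j, A i j = A j i := by
    intro i j; simp [hA, Matrix.sub_apply, hLsymm i j, hLssymm i j]
  have hPsymm : ∀ i j, P i j = P j i := by
    intro i j; simp [hP, Matrix.add_apply, Matrix.smul_apply, hLsymm i j, hAsymm i j]
  have hQsymm : ∀ i j, Q i j = Q j i := by
    intro i j; simp [hQ, Matrix.sub_apply, Matrix.smul_apply, hLsymm i j, hAsymm i j]
  have hKnn : 0 ≤ matSpectralNorm L := norm_nonneg _
  set K := matSpectralNorm L with hK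
  set c : ℝ := 2 * ε * K with hc
  have hc0 : 0 ≤ c := by nlinarith
  have hquad : ∀ z : Fin n → ℝ, z ⬝ᵥ (L *ᵥ z) ≤ K * (z ⬝ᵥ z) := fun z => quad_le_spectral L z
  set y : Fin n → ℝ := A *ᵥ x with hy
  have hyy : (0:ℝ) ≤ y ⬝ᵥ y := dp_self_nonneg y
  have hxx : (0:ℝ) ≤ x ⬝ᵥ x := dp_self_nonneg x
  have hPle : ∀ z : Fin n → ℝ, z ⬝ᵥ (P *ᵥ z) ≤ c * (z ⬝ᵥ z) := by
    intro z; rw [hPq, hAq]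
    have h1 := (hsparse z).2
    have h2 := hquad z
    have h3 : 0 ≤ z ⬝ᵥ z := dp_self_nonneg z
    nlinarith
  have hQle : ∀ z : Fin n → ℝ, z ⬝ᵥ (Q *ᵥ z) ≤ c * (z ⬝ᵥ z) := by
    intro z; rw [hQq, hAq]
    have h1 := (hsparse z).1
    have h2 := hquad z
    have h3 : 0 ≤ z ⬝ᵥ z := dp_self_nonneg z
    nlinarith
  have hcsP := cs_psd_form P (form_symm P hPsymm) hPpos x y
  have hcsQ := cs_psd_form Q (form_symm Q hQsymm) hQpos x y
  have hprodP : (x ⬝ᵥ (P *ᵥ x)) * (y ⬝ᵥ (P *ᵥ y)) ≤ (c * (x ⬝ᵥ x)) * (c * (y ⬝ᵥ y)) :=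
    mul_le_mul (hPle x) (hPle y) (hPpos y) (mul_nonneg hc0 hxx)
  have hprodQ : (x ⬝ᵥ (Q *ᵥ x)) * (y ⬝ᵥ (Q *ᵥ y)) ≤ (c * (x ⬝ᵥ x)) * (c * (y ⬝ᵥ y)) :=
    mul_le_mul (hQle x) (hQle y) (hQpos y) (mul_nonneg hc0 hxx)
  set sx := Real.sqrt (x ⬝ᵥ x) with hsx
  set sy := Real.sqrt (y ⬝ᵥ y) with hsy
  have hsx0 : 0 ≤ sx := Real.sqrt_nonneg _
  have hsy0 : 0 ≤ sy := Real.sqrt_nonneg _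
  have hsx2 : sx ^ 2 = x ⬝ᵥ x := Real.sq_sqrt hxx
  have hsy2 : sy ^ 2 = y ⬝ᵥ y := Real.sq_sqrt hyy
  have hrhs0 : 0 ≤ c * (sx * sy) := mul_nonneg hc0 (mul_nonneg hsx0 hsy0)
  have hrhs_sq : (c * (sx * sy)) ^ 2 = (c * (x ⬝ᵥ x)) * (c * (y ⬝ᵥ y)) := by
    calc (c * (sx * sy)) ^ 2 = c ^ 2 * (sx ^ 2 * sy ^ 2) := by ring
      _ = (c * (x ⬝ᵥ x)) * (c * (y ⬝ᵥ y)) := by rw [hsx2, hsy2]; ring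
  have habsP : |y ⬝ᵥ (P *ᵥ x)| ≤ c * (sx * sy) := by
    rw [← Real.sqrt_sq_eq_abs]
    calc Real.sqrt ((y ⬝ᵥ (P *ᵥ x)) ^ 2) ≤ Real.sqrt ((c * (sx * sy)) ^ 2) := by
          apply Real.sqrt_le_sqrt; rw [hrhs_sq]; exact le_trans hcsP hprodP
      _ = c * (sx * sy) := Real.sqrt_sq hrhs0
  have habsQ : |y ⬝ᵥ (Q *ᵥ x)| ≤ c * (sx * sy) := by
    rw [← Real.sqrt_sq_eq_abs]
    calc Real.sqrt ((y ⬝ᵥ (Q *ᵥ x)) ^ 2) ≤ Real.sqrt ((c * (sx * sy)) ^ 2) := by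
          apply Real.sqrt_le_sqrt; rw [hrhs_sq]; exact le_trans hcsQ hprodQ
      _ = c * (sx * sy) := Real.sqrt_sq hrhs0
  have hdecomp : 2 * (y ⬝ᵥ y) = y ⬝ᵥ (P *ᵥ x) - y ⬝ᵥ (Q *ᵥ x) := by
    have h : y ⬝ᵥ (P *ᵥ x) - y ⬝ᵥ (Q *ᵥ x) = 2 * (y ⬝ᵥ (A *ᵥ x)) := by
      simp only [hP, hQ, Matrix.add_mulVec, Matrix.sub_mulVec, dotProduct_add, dotProduct_sub]
      ring
    rw [h, hy]
  have hstep : y ⬝ᵥ y ≤ c * (sx * sy) := by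
    have h1 := le_abs_self (y ⬝ᵥ (P *ᵥ x))
    have h2 := neg_abs_le (y ⬝ᵥ (Q *ᵥ x))
    linarith
  have hyysq : y ⬝ᵥ y = sy * sy := (Real.mul_self_sqrt hyy).symm
  have hs : sy ≤ c * sx := by
    rcases eq_or_lt_of_le hsy0 with h0 | hpos
    · rw [← h0]; exact mul_nonneg hc0 hsx0
    · nlinarith [hstep, hyysq]
  have hfin : y ⬝ᵥ y ≤ c ^ 2 * (x ⬝ᵥ x) := by
    have := mul_le_mul hs hs hsy0 (mul_nonneg hc0 hsx0)
    nlinarith [hyysq, hsx2]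
  calc ((Ls - L) *ᵥ x) ⬝ᵥ ((Ls - L) *ᵥ x) = y ⬝ᵥ y := rfl
    _ ≤ c ^ 2 * (x ⬝ᵥ x) := hfin
    _ ≤ (4 * ε * K) ^ 2 * (x ⬝ᵥ x) := by
        have hce : c ^ 2 = 4 * (ε ^ 2 * K ^ 2) := by rw [hc]; ring
        have h16 : (4 * ε * K) ^ 2 = 16 * (ε ^ 2 * K ^ 2) := by ring
        have hnn : (0:ℝ) ≤ ε ^ 2 * K ^ 2 := by positivity
        nlinarith [mul_nonneg hnn hxx]

/-- **Theorem 1 (GCN layer is preserved by spectral sparsification).**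
If `L` and `Ls` are symmetric PSD matrices with
`(1-ε)·xᵀLx ≤ xᵀLsx ≤ (1+ε)·xᵀLx` for all `x`, `σ` is 1-Lipschitz (applied entrywise),
and the GCN layer outputs are `σ((I − L)·H·W)` resp. `σ((I − Ls)·H·W)`, then
`‖Ĥ_f − Ĥ_s‖_F ≤ 4ε·‖L‖₂·‖H·W‖_F`. -/
theorem gcn_layer_spectral_sparsification
    {N D F : ℕ} (ε : ℝ) (hε : ε ∈ Set.Ioo (0 : ℝ) 1)
    (L Ls : Matrix (Fin N) (Fin N) ℝ)
    (hL : L.PosSemidef) (hLs : Ls.PosSemidef)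
    (hsparse : ∀ x : Fin N → ℝ,
      (1 - ε) * (x ⬝ᵥ (L *ᵥ x)) ≤ x ⬝ᵥ (Ls *ᵥ x) ∧
      x ⬝ᵥ (Ls *ᵥ x) ≤ (1 + ε) * (x ⬝ᵥ (L *ᵥ x)))
    (σ : ℝ → ℝ) (hσ : LipschitzWith 1 σ)
    (H : Matrix (Fin N) (Fin D) ℝ) (W : Matrix (Fin D) (Fin F) ℝ)
    (Hf Hs : Matrix (Fin N) (Fin F) ℝ)
    (hHf : Hf = (((1 : Matrix (Fin N) (Fin N) ℝ) - L) * H * W).map σ)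
    (hHs : Hs = (((1 : Matrix (Fin N) (Fin N) ℝ) - Ls) * H * W).map σ) :
    frobeniusNorm (Hf - Hs) ≤ 4 * ε * matSpectralNorm L * frobeniusNorm (H * W) := by
  set C := H * W with hC
  set K4 := 4 * ε * matSpectralNorm L with hK4
  have hK4nn : 0 ≤ K4 := by
    have h1 : 0 ≤ matSpectralNorm L := norm_nonneg _
    have h2 : 0 < ε := hε.1
    positivity
  set M1 := ((1 : Matrix (Fin N) (Fin N) ℝ) - L) * H * W with hM1
  set M2 := ((1 : Matrix (Fin N) (Fin N) ℝ) - Ls) * H * W with hM2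
  -- entrywise Lipschitz bound
  have hlip : ∀ i j, ((Hf - Hs) i j) ^ 2 ≤ ((M1 - M2) i j) ^ 2 := by
    intro i j
    have h1 : (Hf - Hs) i j = σ (M1 i j) - σ (M2 i j) := by
      rw [hHf, hHs]; simp [Matrix.sub_apply, Matrix.map_apply]
    have h2 : |σ (M1 i j) - σ (M2 i j)| ≤ |M1 i j - M2 i j| := by
      have := hσ.dist_le_mul (M1 i j) (M2 i j)
      simpa [Real.dist_eq] using this
    rw [h1]
    calc (σ (M1 i j) - σ (M2 i j)) ^ 2 = |σ (M1 i j) - σ (M2 i j)| ^ 2 := (sq_abs _).symm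
      _ ≤ |M1 i j - M2 i j| ^ 2 := by
          apply pow_le_pow_left₀ (abs_nonneg _) h2
      _ = ((M1 - M2) i j) ^ 2 := by rw [sq_abs]; rfl
  -- M1 - M2 = (Ls - L) * C
  have hdiff : M1 - M2 = (Ls - L) * C := by
    rw [hM1, hM2, hC]
    rw [Matrix.mul_assoc, Matrix.mul_assoc, ← Matrix.sub_mul]
    congr 1
    ext i j
    simp [Matrix.sub_apply]
  -- step 1
  have hstep1 : frobeniusNorm (Hf - Hs) ≤ frobeniusNorm ((Ls - L) * C) := by
    rw [← hdiff]
    apply Real.sqrt_le_sqrt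
    apply Finset.sum_le_sum; intro i _
    apply Finset.sum_le_sum; intro j _
    exact hlip i j
  -- step 2 : columnwise bound
  have hcol : ∀ j, ∀ i, ((Ls - L) * C) i j = ((Ls - L) *ᵥ (fun k => C k j)) i := by
    intro j i; simp [Matrix.mul_apply, Matrix.mulVec, dotProduct]
  have hsum : (∑ i, ∑ j, (((Ls - L) * C) i j) ^ 2)
      ≤ K4 ^ 2 * ∑ i, ∑ j, (C i j) ^ 2 := by
    rw [Finset.sum_comm]
    have hrhs : K4 ^ 2 * ∑ i, ∑ j, (C i j) ^ 2 = ∑ j, K4 ^ 2 * ∑ i, (C i j) ^ 2 := by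
      rw [← Finset.mul_sum, Finset.sum_comm]
    rw [hrhs]
    apply Finset.sum_le_sum; intro j _
    have hkey := key_vec_bound ε hε L Ls hL hLs hsparse (fun k => C k j)
    have hl : ∑ i, (((Ls - L) * C) i j) ^ 2
        = ((Ls - L) *ᵥ (fun k => C k j)) ⬝ᵥ ((Ls - L) *ᵥ (fun k => C k j)) := by
      simp only [dotProduct]
      apply Finset.sum_congr rfl; intro i _
      rw [hcol j i]; ring
    have hr : (fun k => C k j) ⬝ᵥ (fun k => C k j) = ∑ i, (C i j) ^ 2 := by
      simp only [dotProduct]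
      apply Finset.sum_congr rfl; intro i _; ring
    rw [hl]
    calc _ ≤ (4 * ε * matSpectralNorm L) ^ 2 * ((fun k => C k j) ⬝ᵥ (fun k => C k j)) := hkey
      _ = K4 ^ 2 * ∑ i, (C i j) ^ 2 := by rw [hr, hK4]
  -- combine
  have hstep2 : frobeniusNorm ((Ls - L) * C) ≤ K4 * frobeniusNorm C := by
    unfold frobeniusNorm
    calc Real.sqrt (∑ i, ∑ j, (((Ls - L) * C) i j) ^ 2)
        ≤ Real.sqrt (K4 ^ 2 * ∑ i, ∑ j, (C i j) ^ 2) := Real.sqrt_le_sqrt hsum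
      _ = K4 * Real.sqrt (∑ i, ∑ j, (C i j) ^ 2) := by
          rw [Real.sqrt_mul (sq_nonneg K4), Real.sqrt_sq hK4nn]
  exact le_trans hstep1 hstep2
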